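/- If a graph G has a k-queue layout, and (V_0, V_1, ..., V_t) is a layering of G (i.e., every edge has its endpoints in the same layer or in consecutive layers), then G has a 3k-queue layout whose vertex ordering places all of V_0 first, then V_1, ..., then V_t, with each layer internally ordered as in the original k-queue layout. -/
import Mathlib


/-- Edges `vw` and `xy` in the same queue must not be nested:
`pos v < pos x < pos y < pos w` is forbidden whenever both pairs are edges
assigned the same queue. -/
def NoNestedPair {V : Type} (G : SimpleGraph V) (pos : V → ℕ) (q : Sym2 V → ℕ) : Prop :=
  ∀ v w x y : V, G.Adj v w → G.Adj x y → q s(v, w) = q s(x, y) →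
    ¬ (pos v < pos x ∧ pos x < pos y ∧ pos y < pos w)

/-- `G` has a `k`-queue layout: an injective vertex ordering `pos : V → ℕ` and an
assignment of each edge to one of `k` queues such that no two edges in the same
queue are nested. -/
def HasQueueLayout {V : Type} (G : SimpleGraph V) (k : ℕ) : Prop :=
  ∃ (pos : V → ℕ) (q : Sym2 V → ℕ), Function.Injective pos ∧
    (∀ e ∈ G.edgeSet, q e < k) ∧ NoNestedPair G pos q

/-- If a graph `G` has a `k`-queue layout (ordering `pos`, queues `q`), and `L` is a
layering of `G` (endpoints of every edge lie in the same or consecutive layers),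
then `G` has a `3k`-queue layout whose vertex ordering `pos'` places layer `0` first,
then layer `1`, etc., with each layer internally ordered as in `pos`. -/
theorem stmt0 {V : Type} [Fintype V] (G : SimpleGraph V) (k : ℕ)
    (pos : V → ℕ) (q : Sym2 V → ℕ)
    (hpos : Function.Injective pos)
    (hq : ∀ e ∈ G.edgeSet, q e < k)
    (hnest : NoNestedPair G pos q)
    (L : V → ℕ)
    (hL : ∀ v w : V, G.Adj v w → L v ≤ L w + 1 ∧ L w ≤ L v + 1) :
    ∃ (pos' : V → ℕ) (q' : Sym2 V → ℕ),
      Function.Injective pos' ∧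
      (∀ v w : V, pos' v < pos' w ↔ (L v < L w ∨ (L v = L w ∧ pos v < pos w))) ∧
      (∀ e ∈ G.edgeSet, q' e < 3 * k) ∧
      NoNestedPair G pos' q' := by
  classical
  set N : ℕ := (Finset.univ.sup pos) + 1 with hN
  have hposN : ∀ u : V, pos u < N := fun u =>
    Nat.lt_succ_of_le (Finset.le_sup (Finset.mem_univ u))
  set pos' : V → ℕ := fun v => L v * N + pos v with hpos'
  have hlt : ∀ a b : V, L a < L b → pos' a < pos' b := by
    intro a b hab
    have h1 : L a * N + pos a < L a * N + N := Nat.add_lt_add_left (hposN a) _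
    have h2 : L a * N + N = (L a + 1) * N := by ring
    have h3 : (L a + 1) * N ≤ L b * N := Nat.mul_le_mul_right N hab
    calc pos' a = L a * N + pos a := rfl
      _ < (L a + 1) * N := by omega
      _ ≤ L b * N := h3
      _ ≤ L b * N + pos b := Nat.le_add_right _ _
  have key : ∀ a b : V, pos' a < pos' b ↔ (L a < L b ∨ (L a = L b ∧ pos a < pos b)) := by
    intro a b
    constructor
    · intro h
      rcases lt_trichotomy (L a) (L b) with h1 | h1 | h1
      · exact Or.inl h1
      · refine Or.inr ⟨h1, ?_⟩
        have : L a * N + pos a < L b * N + pos b := h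
        rw [h1] at this
        exact Nat.lt_of_add_lt_add_left this
      · exact absurd h (Nat.lt_asymm (hlt b a h1))
    · rintro (h | ⟨h, hp⟩)
      · exact hlt a b h
      · show L a * N + pos a < L b * N + pos b
        rw [h]
        exact Nat.add_lt_add_left hp _
  have hinj : Function.Injective pos' := by
    intro a b hab
    have hna : ¬ pos' a < pos' b := by rw [hab]; exact lt_irrefl _
    have hnb : ¬ pos' b < pos' a := by rw [hab]; exact lt_irrefl _
    rw [key] at hna hnb
    have hLab : L a = L b := by omega
    have hpab : pos a = pos b := by omega
    exact hpos hpab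
  -- the queue assignment
  have hf : ∀ a b : V,
      (if L a = L b then q s(a, b)
       else if (L a < L b ∧ pos a < pos b) ∨ (L b < L a ∧ pos b < pos a) then k + q s(a, b)
       else 2 * k + q s(a, b)) =
      (if L b = L a then q s(b, a)
       else if (L b < L a ∧ pos b < pos a) ∨ (L a < L b ∧ pos a < pos b) then k + q s(b, a)
       else 2 * k + q s(b, a)) := by
    intro a b
    have hs : s(a, b) = s(b, a) := Sym2.eq_swap
    rw [hs]
    split_ifs <;> omega
  refine ⟨pos', Sym2.lift ⟨fun a b =>
      if L a = L b then q s(a, b)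
      else if (L a < L b ∧ pos a < pos b) ∨ (L b < L a ∧ pos b < pos a) then k + q s(a, b)
      else 2 * k + q s(a, b), hf⟩, hinj, key, ?_, ?_⟩
  · intro e he
    induction e with
    | _ a b =>
      have hqe : q s(a, b) < k := hq _ he
      simp only [Sym2.lift_mk]
      split_ifs <;> omega
  · intro v w x y hvw hxy hq' hchain
    obtain ⟨h1, h2, h3⟩ := hchain
    rw [key] at h1 h2 h3
    have hq1 : q s(v, w) < k := hq _ (G.mem_edgeSet.2 hvw)
    have hq2 : q s(x, y) < k := hq _ (G.mem_edgeSet.2 hxy)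
    have hLvw := hL v w hvw
    have hLxy := hL x y hxy
    have hne1 : pos v ≠ pos w := fun h => hvw.ne (hpos h)
    have hne2 : pos x ≠ pos y := fun h => hxy.ne (hpos h)
    simp only [Sym2.lift_mk] at hq'
    split_ifs at hq' with c1 c2 c3 c4 c5 c6 c7
    · -- both intra-layer
      have hLx : L v = L x := by omega
      have hLy : L v = L y := by omega
      exact hnest v w x y hvw hxy hq' ⟨by omega, by omega, by omega⟩
    all_goals try omega
    · -- both inter-layer increasing
      have hW : L w = L v + 1 := by omega
      have hX : L x = L v := by omega
      have hY : L y = L w := by omega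
      have hqeq : q s(v, w) = q s(x, y) := by omega
      exact hnest v w x y hvw hxy hqeq ⟨by omega, by omega, by omega⟩
    · -- both inter-layer decreasing
      have hW : L w = L v + 1 := by omega
      have hX : L x = L v := by omega
      have hY : L y = L w := by omega
      have hqeq : q s(y, x) = q s(w, v) := by
        have e1 : s(y, x) = s(x, y) := Sym2.eq_swap
        have e2 : s(w, v) = s(v, w) := Sym2.eq_swap
        rw [e1, e2]; omega
      exact hnest y x w v hxy.symm hvw.symm hqeq ⟨by omega, by omega, by omega⟩
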